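/- Let λ be a Cremer number and let (mⱼ), (Mⱼ), (kⱼ), (rⱼ) satisfy conditions (C1)–(C5) of the construction. Let a(x) = Σ_{j=1}^∞ (2j/Mⱼ)^{mⱼ} x_{[j]}^{mⱼ} and L_k the averaging operator (L_k A)(x) = Σ_{u=0}^{k−1} A(λᵘx). Fix j ≥ 1 and x ∈ ℂⁿ with max_{1≤k≤n}|x_k| ≤ j and |x_{[j]}| ≥ 1/j. Then j ≤ |(L_{kⱼ} a)(x)| ≤ 2(2j²)^{mⱼ} + 2^{mⱼ} − j. -/

import Mathlib

open Topology Filter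

/-- `λ` is a Cremer number: it has modulus one, is not a root of unity, and
`liminf_{m→∞} |λᵐ − 1|^{1/m} = 0`. -/
def IsCremer (lam : ℂ) : Prop :=
  ‖lam‖ = 1 ∧ (∀ k : ℕ, 1 ≤ k → lam ^ k ≠ 1) ∧
    Filter.liminf (fun m : ℕ => ‖lam ^ m - 1‖ ^ ((1 : ℝ) / m)) Filter.atTop = 0

/-- `resIdx n hn j` is the (0-based) index in `Fin n` corresponding to the unique element of
`{1, ..., n}` congruent to `j` modulo `n`. -/
def resIdx (n : ℕ) (hn : 0 < n) (j : ℕ) : Fin n := ⟨(j - 1) % n, Nat.mod_lt _ hn⟩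

/-- The key estimate: under conditions (C1)–(C5), if `max |x_k| ≤ j` and `|x_{[j]}| ≥ 1/j`,
then `j ≤ |(L_{kⱼ} a)(x)| ≤ 2(2j²)^{mⱼ} + 2^{mⱼ} − j`, where
`(L_k a)(x) = Σ_{u<k} a(λᵘ x)`. -/
theorem averaging_estimate {n : ℕ} (hn : 0 < n) (lam : ℂ) (hlam : IsCremer lam)
    (m : ℕ → ℕ) (M : ℕ → ℝ) (k : ℕ → ℕ) (r : ℕ → ℕ)
    (hC1 : ∀ j : ℕ, 1 ≤ j →
      M j = ‖lam ^ m j - 1‖ ^ (-(1 : ℝ) / (m j)) ∧ 4 * (j : ℝ) ^ 2 ≤ M j)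
    (hC2 : ∀ j : ℕ, 1 ≤ j →
      (1 : ℝ) + j + ∑ l ∈ Finset.Ico 1 j,
          2 * (2 * (l : ℝ)) ^ m l * (j : ℝ) ^ m l ≤ (2 : ℝ) ^ m j)
    (hC3 : ∀ j : ℕ, 2 ≤ j → max (m (j - 1)) (r (j - 1)) < min (m j) (r j))
    (hC4 : ∀ j : ℕ, 1 ≤ j → 1 ≤ ‖lam ^ (k j * m j) - 1‖)
    (hC5 : ∀ j : ℕ, 1 ≤ j → (k j : ℝ) * ∑' i : ℕ, ((1 : ℝ) / 2) ^ (i + r j) < 1)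
    (a : (Fin n → ℂ) → ℂ)
    (ha : ∀ x, a x = ∑' l : ℕ,
      (((2 * ((l : ℝ) + 1)) / M (l + 1) : ℝ) : ℂ) ^ m (l + 1) *
        x (resIdx n hn (l + 1)) ^ m (l + 1))
    (j : ℕ) (hj : 1 ≤ j) (x : Fin n → ℂ)
    (hxle : ∀ i : Fin n, ‖x i‖ ≤ j)
    (hxge : 1 / (j : ℝ) ≤ ‖x (resIdx n hn j)‖) :
    (j : ℝ) ≤ ‖∑ u ∈ Finset.range (k j), a fun i => lam ^ u * x i‖ ∧
    ‖∑ u ∈ Finset.range (k j), a fun i => lam ^ u * x i‖ ≤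
      2 * (2 * (j : ℝ) ^ 2) ^ m j + 2 ^ m j - j := by
  obtain ⟨hlam1, hroot, -⟩ := hlam
  have hjR : (1:ℝ) ≤ (j:ℝ) := by exact_mod_cast hj
  have hjpos : (0:ℝ) < j := by linarith
  -- m L ≥ 1 for L ≥ 1
  have hm1 : ∀ L : ℕ, 1 ≤ L → 1 ≤ m L := by
    intro L hL
    by_contra hcon
    have hm0 : m L = 0 := by omega
    have h2 := hC2 L hL
    have hsum : (0:ℝ) ≤ ∑ l ∈ Finset.Ico 1 L, 2 * (2 * (l : ℝ)) ^ m l * (L : ℝ) ^ m l := by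
      apply Finset.sum_nonneg; intro i _; positivity
    have hLR : (1:ℝ) ≤ (L:ℝ) := by exact_mod_cast hL
    rw [hm0, pow_zero] at h2
    linarith
  have hApos : ∀ L : ℕ, 1 ≤ L → 0 < ‖lam ^ m L - 1‖ := by
    intro L hL
    exact norm_pos_iff.mpr (sub_ne_zero.mpr (hroot (m L) (hm1 L hL)))
  have hMpos : ∀ L : ℕ, 1 ≤ L → 0 < M L := by
    intro L hL
    have h := (hC1 L hL).2
    have hLR : (1:ℝ) ≤ (L:ℝ) := by exact_mod_cast hL
    nlinarith
  have hAM : ∀ L : ℕ, 1 ≤ L → ‖lam ^ m L - 1‖ * M L ^ m L = 1 := by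
    intro L hL
    have hA := hApos L hL
    have hmne : (m L : ℝ) ≠ 0 := Nat.cast_ne_zero.mpr (by have := hm1 L hL; omega)
    rw [(hC1 L hL).1,
      ← Real.rpow_natCast (‖lam ^ m L - 1‖ ^ (-(1:ℝ) / (m L))) (m L),
      ← Real.rpow_mul hA.le]
    rw [show (-(1:ℝ) / (m L)) * (m L) = -1 by field_simp]
    rw [Real.rpow_neg_one]
    exact mul_inv_cancel₀ hA.ne'
  have habs2 : ∀ N : ℕ, ‖lam ^ N - 1‖ ≤ 2 := by
    intro N
    calc ‖lam ^ N - 1‖ = ‖lam ^ N - 1‖ := rfl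
      _ ≤ ‖lam ^ N‖ + ‖(1:ℂ)‖ := norm_sub_le _ _
      _ = 2 := by simp [norm_pow, hlam1]; norm_num
  -- geometric sums
  set G : ℕ → ℂ := fun L => ∑ u ∈ Finset.range (k j), (lam ^ m L) ^ u with hGdef
  have hGabs : ∀ L : ℕ, 1 ≤ L →
      ‖G L‖ = ‖lam ^ (m L * k j) - 1‖ * M L ^ m L := by
    intro L hL
    rw [hGdef]
    simp only
    rw [geom_sum_eq (hroot (m L) (hm1 L hL)), ← pow_mul, norm_div, div_eq_mul_inv]
    congr 1
    exact inv_eq_of_mul_eq_one_right (hAM L hL)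
  have hGle : ∀ L : ℕ, ‖G L‖ ≤ k j := by
    intro L
    calc ‖G L‖ ≤ ∑ u ∈ Finset.range (k j), ‖(lam ^ m L) ^ u‖ :=
          norm_sum_le _ _
      _ = ∑ u ∈ Finset.range (k j), 1 := by
          refine Finset.sum_congr rfl fun u _ => ?_
          rw [← pow_mul, norm_pow, hlam1, one_pow]
      _ = k j := by simp
  have hGupper : ∀ L : ℕ, 1 ≤ L → ‖G L‖ ≤ 2 * M L ^ m L := by
    intro L hL
    rw [hGabs L hL]
    have hM : (0:ℝ) ≤ M L ^ m L := le_of_lt (pow_pos (hMpos L hL) _)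
    have := habs2 (m L * k j)
    nlinarith
  -- coefficients and terms
  set cR : ℕ → ℝ := fun l => 2 * ((l:ℝ) + 1) / M (l + 1) with hcRdef
  have hcRnn : ∀ l : ℕ, 0 ≤ cR l := by
    intro l
    have := hMpos (l+1) (Nat.le_add_left 1 l)
    rw [hcRdef]
    positivity
  set f : ℕ → ℂ := fun l =>
    (cR l : ℂ) ^ m (l + 1) * x (resIdx n hn (l + 1)) ^ m (l + 1) * G (l + 1) with hfdef
  have hfabs : ∀ l : ℕ, ‖f l‖ =
      cR l ^ m (l + 1) * ‖x (resIdx n hn (l + 1))‖ ^ m (l + 1) *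
        ‖G (l + 1)‖ := by
    intro l
    rw [hfdef]
    simp [norm_mul, norm_pow, Complex.norm_real, Real.norm_eq_abs, abs_of_nonneg (hcRnn l)]
  -- bound cR l * j ≤ 1/2 for l + 1 ≥ j (used for the tail), and summability majorant
  have hcRj2 : ∀ l : ℕ, (j:ℝ) ≤ (l:ℝ) + 1 → cR l * j ≤ 1 / 2 := by
    intro l hl
    have hL1 : (1:ℝ) ≤ (l:ℝ) + 1 := by
      have : (0:ℝ) ≤ (l:ℝ) := Nat.cast_nonneg l
      linarith
    have hM4 := (hC1 (l+1) (Nat.le_add_left 1 l)).2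
    have hMp := hMpos (l+1) (Nat.le_add_left 1 l)
    push_cast at hM4
    rw [hcRdef]
    simp only
    rw [div_mul_eq_mul_div, div_le_div_iff₀ hMp (by norm_num : (0:ℝ) < 2)]
    nlinarith
  set D : ℕ → ℝ := fun l => cR l ^ m (l + 1) * (j:ℝ) ^ m (l + 1) with hDdef
  have hDnn : ∀ l, 0 ≤ D l := by
    intro l
    rw [hDdef]
    have := hcRnn l
    positivity
  -- chain for exponents beyond j
  have hC3' : ∀ t : ℕ, max (m (j + t)) (r (j + t)) < min (m (j + t + 1)) (r (j + t + 1)) := by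
    intro t
    have h := hC3 (j + t + 1) (by omega)
    simpa using h
  have hm_tail : ∀ i : ℕ, r j + 1 + i ≤ m (j + 1 + i) := by
    have key : ∀ i : ℕ, r j + 1 + i ≤ min (m (j + 1 + i)) (r (j + 1 + i)) := by
      intro i
      induction i with
      | zero =>
        have h := hC3' 0
        simp only [Nat.add_zero] at h ⊢
        omega
      | succ p ih =>
        have h := hC3' (p + 1)
        rw [show j + (p + 1) = j + 1 + p from by omega] at h
        rw [show j + 1 + p + 1 = j + 1 + (p + 1) from by omega] at h
        omega
    intro i
    have := key i
    omega
  -- tail term bound: D (i + j) ≤ (1/2)^(r j + 1 + i)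
  have hDtail : ∀ i : ℕ, D (i + j) ≤ (1/2:ℝ) ^ (r j + 1 + i) := by
    intro i
    have hL : (j:ℝ) ≤ ((i + j : ℕ):ℝ) + 1 := by push_cast; linarith [Nat.cast_nonneg (α := ℝ) i]
    have h12 := hcRj2 (i + j) hL
    have hcnn := hcRnn (i + j)
    have hidx : i + j + 1 = j + 1 + i := by omega
    have hmge : r j + 1 + i ≤ m (i + j + 1) := by rw [hidx]; exact hm_tail i
    calc D (i + j) = (cR (i + j) * j) ^ m (i + j + 1) := by rw [hDdef]; simp [mul_pow]
      _ ≤ (1/2:ℝ) ^ m (i + j + 1) := by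
          apply pow_le_pow_left₀ (by positivity) h12
      _ ≤ (1/2:ℝ) ^ (r j + 1 + i) := by
          apply pow_le_pow_of_le_one (by norm_num) (by norm_num) hmge
  have hDsum : Summable D := by
    rw [← summable_nat_add_iff j]
    apply Summable.of_nonneg_of_le (fun i => hDnn _) (fun i => (hDtail i).trans ?_)
    · exact Summable.of_nonneg_of_le (fun i => by positivity)
        (fun i => pow_le_pow_of_le_one (by norm_num) (by norm_num) (by omega : i ≤ r j + 1 + i))
        summable_geometric_two
    · exact le_refl _
  have hfle : ∀ l : ℕ, ‖f l‖ ≤ D l * k j := by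
    intro l
    rw [hfabs l, hDdef]
    simp only
    have h1 : ‖x (resIdx n hn (l+1))‖ ^ m (l+1) ≤ (j:ℝ) ^ m (l+1) :=
      pow_le_pow_left₀ (norm_nonneg _) (hxle _) _
    have h2 := hGle (l+1)
    have hb : (0:ℝ) ≤ cR l ^ m (l+1) * (j:ℝ) ^ m (l+1) := by
      have := hcRnn l; positivity
    exact mul_le_mul (mul_le_mul_of_nonneg_left h1 (pow_nonneg (hcRnn l) _)) h2
      (norm_nonneg _) hb
  have hfsum : Summable f := by
    apply Summable.of_norm_bounded (g := fun l => D l * k j) (hDsum.mul_right _)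
    intro l
    exact hfle l
  -- Step 1: swap sum and tsum
  have hswap : (∑ u ∈ Finset.range (k j), a fun i => lam ^ u * x i) = ∑' l, f l := by
    have hgs : ∀ u ∈ Finset.range (k j), Summable (fun l : ℕ =>
        (cR l : ℂ) ^ m (l + 1) * ((lam ^ m (l + 1)) ^ u * x (resIdx n hn (l + 1)) ^ m (l + 1))) := by
      intro u _
      apply Summable.of_norm_bounded (g := D) hDsum
      intro l
      have h1 : ‖x (resIdx n hn (l+1))‖ ^ m (l+1) ≤ (j:ℝ) ^ m (l+1) :=
        pow_le_pow_left₀ (norm_nonneg _) (hxle _) _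
      rw [hDdef]
      simp only [norm_mul, norm_pow, Complex.norm_real, Real.norm_eq_abs, abs_of_nonneg (hcRnn l)]
      rw [hlam1, one_pow, one_pow, one_mul]
      exact mul_le_mul_of_nonneg_left h1 (pow_nonneg (hcRnn l) _)
    calc (∑ u ∈ Finset.range (k j), a fun i => lam ^ u * x i)
        = ∑ u ∈ Finset.range (k j), ∑' l : ℕ,
            (cR l : ℂ) ^ m (l + 1) * ((lam ^ m (l + 1)) ^ u * x (resIdx n hn (l + 1)) ^ m (l + 1)) := by
          refine Finset.sum_congr rfl fun u _ => ?_
          rw [ha]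
          refine tsum_congr fun l => ?_
          rw [mul_pow]
          rw [show (lam ^ u) ^ m (l+1) = (lam ^ m (l+1)) ^ u by
            rw [← pow_mul, mul_comm, pow_mul]]
      _ = ∑' l : ℕ, ∑ u ∈ Finset.range (k j),
            (cR l : ℂ) ^ m (l + 1) * ((lam ^ m (l + 1)) ^ u * x (resIdx n hn (l + 1)) ^ m (l + 1)) :=
          (Summable.tsum_finsetSum hgs).symm
      _ = ∑' l, f l := by
          refine tsum_congr fun l => ?_
          rw [hfdef, hGdef]
          simp only
          rw [← Finset.mul_sum, ← Finset.sum_mul]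
          ring
  -- Step 2: split the tsum
  have hsplit : ∑' l, f l = (∑ l ∈ Finset.range (j - 1), f l) + f (j - 1) + ∑' i, f (i + j) := by
    rw [← hfsum.sum_add_tsum_nat_add j]
    congr 1
    obtain ⟨p, rfl⟩ : ∃ p, j = p + 1 := ⟨j - 1, by omega⟩
    simp [Finset.sum_range_succ]
  -- the j-th term
  have hj1 : j - 1 + 1 = j := by omega
  have hcast1 : ((j - 1 : ℕ) : ℝ) + 1 = (j:ℝ) := by
    rw [Nat.cast_sub hj]; ring
  have hcRjval : cR (j - 1) = 2 * (j:ℝ) / M j := by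
    rw [hcRdef]; simp only; rw [hcast1, hj1]
  have hMjpos := hMpos j hj
  have habsfJ : ‖f (j - 1)‖ =
      (2 * (j:ℝ) / M j) ^ m j * ‖x (resIdx n hn j)‖ ^ m j * ‖G j‖ := by
    rw [hfabs (j-1), hj1, hcRjval]
  have hGjlow : M j ^ m j ≤ ‖G j‖ := by
    rw [hGabs j hj]
    have h4 := hC4 j hj
    rw [mul_comm (k j) (m j)] at h4
    nlinarith [pow_pos hMjpos (m j)]
  have hJlow : (2:ℝ) ^ m j ≤ ‖f (j - 1)‖ := by
    rw [habsfJ]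
    calc (2:ℝ) ^ m j = (2 * (j:ℝ) / M j) ^ m j * (1 / (j:ℝ)) ^ m j * M j ^ m j := by
          have hjne : (j:ℝ) ≠ 0 := ne_of_gt hjpos
          have hMne : M j ≠ 0 := ne_of_gt hMjpos
          have hb : 2 * (j:ℝ) / M j * (1 / (j:ℝ)) * M j = 2 := by
            field_simp
          rw [← mul_pow, ← mul_pow, hb]
      _ ≤ (2 * (j:ℝ) / M j) ^ m j * ‖x (resIdx n hn j)‖ ^ m j *
            ‖G j‖ := by
          have hb : (0:ℝ) ≤ 2 * (j:ℝ) / M j := by positivity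
          have h1 : (1 / (j:ℝ)) ^ m j ≤ ‖x (resIdx n hn j)‖ ^ m j :=
            pow_le_pow_left₀ (by positivity) hxge _
          gcongr
  have hJhigh : ‖f (j - 1)‖ ≤ 2 * (2 * (j:ℝ) ^ 2) ^ m j := by
    rw [habsfJ]
    calc (2 * (j:ℝ) / M j) ^ m j * ‖x (resIdx n hn j)‖ ^ m j * ‖G j‖
        ≤ (2 * (j:ℝ) / M j) ^ m j * (j:ℝ) ^ m j * (2 * M j ^ m j) := by
          have hb : (0:ℝ) ≤ 2 * (j:ℝ) / M j := by positivity
          have h1 : ‖x (resIdx n hn j)‖ ^ m j ≤ (j:ℝ) ^ m j :=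
            pow_le_pow_left₀ (norm_nonneg _) (hxle _) _
          gcongr
          exact hGupper j hj
      _ = 2 * (2 * (j:ℝ) ^ 2) ^ m j := by
          have hMne : M j ≠ 0 := ne_of_gt hMjpos
          rw [div_pow]
          field_simp [mul_pow]
          ring
  -- bound for terms l < j - 1
  have hS1 : ∑ l ∈ Finset.range (j - 1), ‖f l‖ ≤ (2:ℝ) ^ m j - 1 - j := by
    have hterm : ∀ l ∈ Finset.range (j - 1),
        ‖f l‖ ≤ 2 * (2 * (((l:ℝ) + 1))) ^ m (l + 1) * (j:ℝ) ^ m (l + 1) := by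
      intro l hl
      rw [hfabs l]
      have hMp := hMpos (l+1) (Nat.le_add_left 1 l)
      have h1 : ‖x (resIdx n hn (l+1))‖ ^ m (l+1) ≤ (j:ℝ) ^ m (l+1) :=
        pow_le_pow_left₀ (norm_nonneg _) (hxle _) _
      have h2 := hGupper (l+1) (Nat.le_add_left 1 l)
      have hcn := hcRnn l
      calc cR l ^ m (l + 1) * ‖x (resIdx n hn (l + 1))‖ ^ m (l + 1) *
            ‖G (l + 1)‖
          ≤ cR l ^ m (l + 1) * (j:ℝ) ^ m (l + 1) * (2 * M (l+1) ^ m (l+1)) := by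
            gcongr
        _ = 2 * ((cR l * M (l+1)) ^ m (l+1)) * (j:ℝ) ^ m (l+1) := by
            rw [mul_pow]; ring
        _ = 2 * (2 * ((l:ℝ) + 1)) ^ m (l + 1) * (j:ℝ) ^ m (l + 1) := by
            rw [show cR l * M (l+1) = 2 * ((l:ℝ) + 1) by
              rw [hcRdef]; field_simp]
    have h2 := hC2 j hj
    rw [Finset.sum_Ico_eq_sum_range] at h2
    have heq : ∀ i ∈ Finset.range (j - 1),
        2 * (2 * ((1 + i : ℕ):ℝ)) ^ m (1 + i) * (j:ℝ) ^ m (1 + i)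
          = 2 * (2 * (((i:ℝ) + 1))) ^ m (i + 1) * (j:ℝ) ^ m (i + 1) := by
      intro i _
      rw [Nat.add_comm 1 i]
      push_cast
      ring_nf
    rw [Finset.sum_congr rfl heq] at h2
    calc ∑ l ∈ Finset.range (j - 1), ‖f l‖
        ≤ ∑ l ∈ Finset.range (j - 1), 2 * (2 * (((l:ℝ) + 1))) ^ m (l + 1) * (j:ℝ) ^ m (l + 1) :=
          Finset.sum_le_sum hterm
      _ ≤ (2:ℝ) ^ m j - 1 - j := by linarith
  -- tail bound
  have htailterm : ∀ i : ℕ, ‖f (i + j)‖ ≤ (k j : ℝ) * (1/2:ℝ) ^ (i + r j) := by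
    intro i
    calc ‖f (i + j)‖ ≤ D (i + j) * k j := hfle (i + j)
      _ ≤ (1/2:ℝ) ^ (i + r j) * k j := by
          have h := (hDtail i).trans (pow_le_pow_of_le_one (by norm_num) (by norm_num)
            (show i + r j ≤ r j + 1 + i by omega))
          exact mul_le_mul_of_nonneg_right h (Nat.cast_nonneg _)
      _ = (k j : ℝ) * (1/2:ℝ) ^ (i + r j) := mul_comm _ _
  have hmajsum : Summable (fun i : ℕ => (k j : ℝ) * (1/2:ℝ) ^ (i + r j)) := by
    apply Summable.mul_left
    have : Summable (fun i : ℕ => (1/2:ℝ) ^ i * (1/2:ℝ) ^ r j) :=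
      summable_geometric_two.mul_right _
    simpa [pow_add] using this
  have htail : ‖∑' i, f (i + j)‖ < 1 := by
    have hns : Summable (fun i : ℕ => ‖f (i + j)‖) :=
      Summable.of_nonneg_of_le (fun i => norm_nonneg _) htailterm hmajsum
    calc ‖∑' i, f (i + j)‖ = ‖∑' i, f (i + j)‖ := rfl
      _ ≤ ∑' i, ‖f (i + j)‖ := norm_tsum_le_tsum_norm hns
      _ ≤ ∑' i, (k j : ℝ) * (1/2:ℝ) ^ (i + r j) := Summable.tsum_le_tsum htailterm hns hmajsum
      _ = (k j : ℝ) * ∑' i : ℕ, ((1:ℝ)/2) ^ (i + r j) := by rw [tsum_mul_left]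
      _ < 1 := hC5 j hj
  -- assemble
  rw [hswap, hsplit]
  set S1 : ℂ := ∑ l ∈ Finset.range (j - 1), f l with hS1def
  set T3 : ℂ := ∑' i, f (i + j) with hT3def
  have hS1abs : ‖S1‖ ≤ (2:ℝ) ^ m j - 1 - j := by
    calc ‖S1‖ ≤ ∑ l ∈ Finset.range (j - 1), ‖f l‖ :=
        norm_sum_le _ _
      _ ≤ (2:ℝ) ^ m j - 1 - j := hS1
  constructor
  · have h1 : ‖f (j - 1)‖ ≤ ‖S1 + f (j - 1) + T3‖ + ‖S1‖ + ‖T3‖ := by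
      have he : f (j - 1) = S1 + f (j - 1) + T3 - S1 - T3 := by ring
      calc ‖f (j - 1)‖ = ‖S1 + f (j - 1) + T3 - S1 - T3‖ := by rw [← he]
        _ ≤ ‖S1 + f (j - 1) + T3 - S1‖ + ‖T3‖ := norm_sub_le _ _
        _ ≤ ‖S1 + f (j - 1) + T3‖ + ‖S1‖ + ‖T3‖ := by
            have := norm_sub_le (S1 + f (j - 1) + T3) S1
            linarith
    linarith
  · calc ‖S1 + f (j - 1) + T3‖ ≤ ‖S1 + f (j - 1)‖ + ‖T3‖ := norm_add_le _ _
      _ ≤ ‖S1‖ + ‖f (j - 1)‖ + ‖T3‖ := by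
          have := norm_add_le S1 (f (j - 1))
          linarith
      _ ≤ 2 * (2 * (j:ℝ) ^ 2) ^ m j + 2 ^ m j - j := by linarith
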